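/- Let 0 = t₀ < t₁ < ⋯ < t_N = T with h_k = t_k − t_{k−1}. Let a, b : [0,1] × [0,T] → ℝ be functions such that for each k there exist square-integrable functions α_k, β_k, γ_k, δ_k : (0,1) → ℝ with a(x,t) = α_k(x) + β_k(x)·t and b(x,t) = γ_k(x) + δ_k(x)·t for all x ∈ (0,1) and t ∈ [t_{k−1}, t_k]. Define (Πb)(x,t) := (1/h_k)∫_{t_{k−1}}^{t_k} b(x,s) ds for t ∈ (t_{k−1}, t_k). Then ∫₀¹ ∫₀ᵀ a(x,t)·(Πb)(x,t) dt dx = ∫₀¹ ∫₀ᵀ a(x,t)·b(x,t) dt dx − Σ_{k=1}^{N} (h_k²/12)·∫₀¹ ∫_{t_{k−1}}^{t_k} β_k(x)·δ_k(x) dt dx. -/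

import Mathlib

open MeasureTheory

open Set in
private lemma l2_mul_integrable {μ : Measure ℝ} {f g : ℝ → ℝ} (hf : MemLp f 2 μ)
    (hg : MemLp g 2 μ) : Integrable (fun x => f x * g x) μ := by
  have h : MemLp (f • g) 1 μ :=
    hg.smul hf (hpqr := ⟨by simp [one_div, ENNReal.inv_two_add_inv_two]⟩)
  exact memLp_one_iff_integrable.mp h

private lemma quad_integral (p q A B C : ℝ) :
    ∫ s in p..q, (A + B * s + C * s ^ 2) =
      A * (q - p) + B * (q ^ 2 - p ^ 2) / 2 + C * (q ^ 3 - p ^ 3) / 3 := by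
  have h1 : IntervalIntegrable (fun _ : ℝ => A) volume p q := intervalIntegrable_const
  have h2 : IntervalIntegrable (fun s : ℝ => B * s) volume p q :=
    (continuous_const.mul continuous_id).intervalIntegrable p q
  have h3 : IntervalIntegrable (fun s : ℝ => C * s ^ 2) volume p q :=
    (continuous_const.mul (continuous_pow 2)).intervalIntegrable p q
  rw [intervalIntegral.integral_add (h1.add h2) h3, intervalIntegral.integral_add h1 h2,
    intervalIntegral.integral_const, intervalIntegral.integral_const_mul,
    intervalIntegral.integral_const_mul, integral_id, integral_pow, smul_eq_mul]
  push_cast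
  ring

private lemma iint_of_eqOn_Ioo {f : ℝ → ℝ} {p q : ℝ} (hpq : p ≤ q) {g : ℝ → ℝ} (hg : Continuous g)
    (h : ∀ s ∈ Set.Ioo p q, f s = g s) : IntervalIntegrable f volume p q := by
  rw [intervalIntegrable_iff_integrableOn_Ioc_of_le hpq, integrableOn_Ioc_iff_integrableOn_Ioo]
  exact ((hg.integrableOn_Icc).mono_set Set.Ioo_subset_Icc_self).congr_fun
    (fun s hs => (h s hs).symm) measurableSet_Ioo

private lemma interval_ab {p q A B C D : ℝ} (hpq : p ≤ q) {f g : ℝ → ℝ}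
    (hf : ∀ s ∈ Set.Icc p q, f s = A + B * s)
    (hg : ∀ s ∈ Set.Icc p q, g s = C + D * s) :
    ∫ s in p..q, f s * g s =
      A * C * (q - p) + (A * D + B * C) * (q ^ 2 - p ^ 2) / 2 + B * D * (q ^ 3 - p ^ 3) / 3 := by
  have e : Set.EqOn (fun s => f s * g s)
      (fun s => A * C + (A * D + B * C) * s + B * D * s ^ 2) (Set.uIcc p q) := by
    rw [Set.uIcc_of_le hpq]
    intro s hs
    simp only
    rw [hf s hs, hg s hs]; ring
  rw [intervalIntegral.integral_congr e, quad_integral]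

private lemma interval_aPb {p q A B C D : ℝ} (hpq : p < q) {f g G : ℝ → ℝ}
    (hf : ∀ s ∈ Set.Icc p q, f s = A + B * s)
    (hg : ∀ s ∈ Set.Icc p q, g s = C + D * s)
    (hG : ∀ s ∈ Set.Ioo p q, G s = (1 / (q - p)) * ∫ r in p..q, g r) :
    ∫ s in p..q, f s * G s =
      (A * C * (q - p) + (A * D + B * C) * (q ^ 2 - p ^ 2) / 2 + B * D * (q ^ 3 - p ^ 3) / 3)
        - B * D * (q - p) ^ 3 / 12 := by
  have hgi : ∫ r in p..q, g r = C * (q - p) + D * (q ^ 2 - p ^ 2) / 2 := by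
    have e : Set.EqOn g (fun s => C + D * s + 0 * s ^ 2) (Set.uIcc p q) := by
      rw [Set.uIcc_of_le hpq.le]
      intro s hs; simp only; rw [hg s hs]; ring
    rw [intervalIntegral.integral_congr e, quad_integral]; ring
  set c : ℝ := (1 / (q - p)) * (C * (q - p) + D * (q ^ 2 - p ^ 2) / 2) with hc
  have step : ∫ s in p..q, f s * G s = ∫ s in p..q, (A * c + (B * c) * s + 0 * s ^ 2) := by
    rw [intervalIntegral.integral_of_le hpq.le, intervalIntegral.integral_of_le hpq.le,
      integral_Ioc_eq_integral_Ioo, integral_Ioc_eq_integral_Ioo]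
    refine setIntegral_congr_fun measurableSet_Ioo fun s hs => ?_
    rw [hf s (Set.Ioo_subset_Icc_self hs), hG s hs, hgi]
    simp only [hc]; ring
  have hne : q - p ≠ 0 := sub_ne_zero.mpr hpq.ne'
  rw [step, quad_integral, hc]
  field_simp
  ring

/-- For functions `a(x,t) = αₖ(x) + βₖ(x)t`, `b(x,t) = γₖ(x) + δₖ(x)t` on `(0,1) × [tₖ₋₁,tₖ]`
(tensor products of square-integrable functions in space and affine functions in time on each
time subinterval of a partition `0 = t₀ < ⋯ < t_N = T`), and `Πb` the time-wise piecewise mean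
of `b`:
`∫₀¹∫₀ᵀ a·Πb = ∫₀¹∫₀ᵀ a·b − Σₖ (hₖ²/12)·∫₀¹∫ βₖ·δₖ`. -/
theorem tensor_affine_projection_penalty (T : ℝ) (N : ℕ) (hN : 0 < N)
    (t : ℕ → ℝ) (ht0 : t 0 = 0) (htN : t N = T)
    (hmono : ∀ k < N, t k < t (k + 1))
    (a b Pb : ℝ → ℝ → ℝ) (α β γ δ : ℕ → ℝ → ℝ)
    (hα : ∀ k, MemLp (α k) 2 (volume.restrict (Set.Ioo (0 : ℝ) 1)))
    (hβ : ∀ k, MemLp (β k) 2 (volume.restrict (Set.Ioo (0 : ℝ) 1)))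
    (hγ : ∀ k, MemLp (γ k) 2 (volume.restrict (Set.Ioo (0 : ℝ) 1)))
    (hδ : ∀ k, MemLp (δ k) 2 (volume.restrict (Set.Ioo (0 : ℝ) 1)))
    (ha : ∀ k < N, ∀ x ∈ Set.Ioo (0 : ℝ) 1, ∀ s ∈ Set.Icc (t k) (t (k + 1)),
        a x s = α k x + β k x * s)
    (hb : ∀ k < N, ∀ x ∈ Set.Ioo (0 : ℝ) 1, ∀ s ∈ Set.Icc (t k) (t (k + 1)),
        b x s = γ k x + δ k x * s)
    (hP : ∀ k < N, ∀ x : ℝ, ∀ s ∈ Set.Ioo (t k) (t (k + 1)),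
        Pb x s = (1 / (t (k + 1) - t k)) * ∫ r in (t k)..(t (k + 1)), b x r) :
    (∫ x in (0 : ℝ)..1, ∫ s in (0 : ℝ)..T, a x s * Pb x s)
      = (∫ x in (0 : ℝ)..1, ∫ s in (0 : ℝ)..T, a x s * b x s)
        - ∑ k ∈ Finset.range N, ((t (k + 1) - t k) ^ 2 / 12) *
            ∫ x in (0 : ℝ)..1, ∫ s in (t k)..(t (k + 1)), β k x * δ k x := by
  set H : ℕ → ℝ → ℝ := fun k x =>
    α k x * γ k x * (t (k + 1) - t k)
      + (α k x * δ k x + β k x * γ k x) * ((t (k + 1)) ^ 2 - (t k) ^ 2) / 2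
      + β k x * δ k x * ((t (k + 1)) ^ 3 - (t k) ^ 3) / 3 with hHdef
  set Q : ℕ → ℝ → ℝ := fun k x => β k x * δ k x * (t (k + 1) - t k) ^ 3 / 12 with hQdef
  -- per-x sum formulas
  have key_b : ∀ x ∈ Set.Ioo (0 : ℝ) 1,
      (∫ s in (0 : ℝ)..T, a x s * b x s) = ∑ k ∈ Finset.range N, H k x := by
    intro x hx
    have hint : ∀ k < N, IntervalIntegrable (fun s => a x s * b x s) volume (t k) (t (k + 1)) :=
      fun k hk =>
        iint_of_eqOn_Ioo (hmono k hk).le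
          (g := fun s => (α k x + β k x * s) * (γ k x + δ k x * s)) (by fun_prop)
          (fun s hs => by
            rw [ha k hk x hx s (Set.Ioo_subset_Icc_self hs),
              hb k hk x hx s (Set.Ioo_subset_Icc_self hs)])
    rw [← ht0, ← htN, ← intervalIntegral.sum_integral_adjacent_intervals hint]
    exact Finset.sum_congr rfl fun k hk =>
      interval_ab (hmono k (Finset.mem_range.mp hk)).le
        (ha k (Finset.mem_range.mp hk) x hx) (hb k (Finset.mem_range.mp hk) x hx)
  have key_Pb : ∀ x ∈ Set.Ioo (0 : ℝ) 1,
      (∫ s in (0 : ℝ)..T, a x s * Pb x s) = ∑ k ∈ Finset.range N, (H k x - Q k x) := by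
    intro x hx
    have hint : ∀ k < N, IntervalIntegrable (fun s => a x s * Pb x s) volume (t k) (t (k + 1)) :=
      fun k hk =>
        iint_of_eqOn_Ioo (hmono k hk).le
          (g := fun s => (α k x + β k x * s) *
            ((1 / (t (k + 1) - t k)) * ∫ r in (t k)..(t (k + 1)), b x r)) (by fun_prop)
          (fun s hs => by
            rw [ha k hk x hx s (Set.Ioo_subset_Icc_self hs), hP k hk x s hs])
    rw [← ht0, ← htN, ← intervalIntegral.sum_integral_adjacent_intervals hint]
    exact Finset.sum_congr rfl fun k hk =>
      interval_aPb (hmono k (Finset.mem_range.mp hk))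
        (ha k (Finset.mem_range.mp hk) x hx) (hb k (Finset.mem_range.mp hk) x hx)
        (hP k (Finset.mem_range.mp hk) x)
  -- integrability over the spatial interval
  have hIH : ∀ k ∈ Finset.range N,
      Integrable (fun x => H k x) (volume.restrict (Set.Ioo (0 : ℝ) 1)) := by
    intro k _
    exact (((l2_mul_integrable (hα k) (hγ k)).mul_const _).add
      ((((l2_mul_integrable (hα k) (hδ k)).add
        (l2_mul_integrable (hβ k) (hγ k))).mul_const _).div_const _)).add
      (((l2_mul_integrable (hβ k) (hδ k)).mul_const _).div_const _)
  have hIQ : ∀ k ∈ Finset.range N,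
      Integrable (fun x => Q k x) (volume.restrict (Set.Ioo (0 : ℝ) 1)) := by
    intro k _
    exact ((l2_mul_integrable (hβ k) (hδ k)).mul_const _).div_const _
  -- rewrite both outer integrals as integrals over Ioo of the sums
  have e1 : (∫ x in (0 : ℝ)..1, ∫ s in (0 : ℝ)..T, a x s * Pb x s)
      = ∫ x in Set.Ioo (0 : ℝ) 1, ∑ k ∈ Finset.range N, (H k x - Q k x) := by
    rw [intervalIntegral.integral_of_le zero_le_one, integral_Ioc_eq_integral_Ioo]
    exact setIntegral_congr_fun measurableSet_Ioo key_Pb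
  have e2 : (∫ x in (0 : ℝ)..1, ∫ s in (0 : ℝ)..T, a x s * b x s)
      = ∫ x in Set.Ioo (0 : ℝ) 1, ∑ k ∈ Finset.range N, H k x := by
    rw [intervalIntegral.integral_of_le zero_le_one, integral_Ioc_eq_integral_Ioo]
    exact setIntegral_congr_fun measurableSet_Ioo key_b
  have e3 : (fun x => ∑ k ∈ Finset.range N, (H k x - Q k x))
      = fun x => (∑ k ∈ Finset.range N, H k x) - ∑ k ∈ Finset.range N, Q k x := by
    funext x; rw [Finset.sum_sub_distrib]
  have e4 : ∫ x in Set.Ioo (0 : ℝ) 1, ∑ k ∈ Finset.range N, Q k x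
      = ∑ k ∈ Finset.range N, ((t (k + 1) - t k) ^ 2 / 12) *
          ∫ x in (0 : ℝ)..1, ∫ s in (t k)..(t (k + 1)), β k x * δ k x := by
    rw [integral_finset_sum _ hIQ]
    refine Finset.sum_congr rfl fun k _ => ?_
    rw [intervalIntegral.integral_of_le zero_le_one, integral_Ioc_eq_integral_Ioo]
    simp only [intervalIntegral.integral_const, smul_eq_mul, hQdef]
    rw [integral_div, integral_mul_const, MeasureTheory.integral_const_mul]
    ring
  rw [e1, e2, e3, integral_sub (integrable_finset_sum _ hIH) (integrable_finset_sum _ hIQ), e4]
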